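/- Let s be a square-free-runs string, i.e., s[i] ≠ s[i+1] for all 1 ≤ i < |s|. Then s is a P-position of StrNim if and only if |s| is even. -/

import Mathlib

/-- A move in StrNim: remove a nonempty contiguous block of a single repeated character. -/
def StrMove {α : Type*} (s t : List α) : Prop :=
  ∃ (x : List α) (c : α) (k : ℕ) (y : List α),
    1 ≤ k ∧ s = x ++ List.replicate k c ++ y ∧ t = x ++ y

/-- N-positions of StrNim: there is a move to a position all of whose successors are N-positions
(i.e. a move to a P-position). -/
inductive NPos {α : Type*} : List α → Prop where
  | intro {s t : List α} (h : StrMove s t) (ht : ∀ u, StrMove t u → NPos u) : NPos s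

/-- P-positions of StrNim: every successor is an N-position. -/
def PPos {α : Type*} (s : List α) : Prop := ∀ t, StrMove s t → NPos t

lemma npos_not_ppos {α : Type*} {s : List α} (h : NPos s) : ¬ PPos s := by
  induction h with
  | intro h ht ih =>
    intro hp
    obtain ⟨h2, ht2⟩ := hp _ h
    exact ih _ h2 ht2

lemma move_tail {α : Type*} (c : α) (s' : List α) : StrMove (c :: s') s' :=
  ⟨[], c, 1, s', le_refl 1, by simp, by simp⟩

lemma move_struct {α : Type*} {s t : List α} (hs : s.Chain' (· ≠ ·)) (hm : StrMove s t) :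
    s ≠ [] ∧ t.length + 1 = s.length ∧
      (t.Chain' (· ≠ ·) ∨
        ∃ u, StrMove t u ∧ u.Chain' (· ≠ ·) ∧ u.length + 2 = s.length) := by
  obtain ⟨x, c, k, y, hk, hseq, hteq⟩ := hm
  -- k must be 1
  have hk1 : k = 1 := by
    match k, hk with
    | 1, _ => rfl
    | (k+2), _ =>
      exfalso
      rw [hseq] at hs
      have h2 : (x ++ List.replicate (k+2) c).Chain' (· ≠ ·) :=
        (List.isChain_append.mp hs).1
      have h3 : (List.replicate (k+2) c).Chain' (· ≠ ·) :=
        (List.isChain_append.mp h2).2.1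
      simp [List.Chain', List.replicate_succ, List.isChain_cons_cons] at h3
  subst hk1
  have hseq' : s = x ++ c :: y := by simpa using hseq
  subst hseq'
  refine ⟨by simp, by simp [hteq]; omega, ?_⟩
  have hx : x.Chain' (· ≠ ·) := (List.isChain_append.mp hs).1
  have hcy : (c :: y).Chain' (· ≠ ·) := by
    have := (List.isChain_append.mp (by simpa [List.Chain'] using hs)).2.1
    simpa [List.Chain'] using this
  have hy : y.Chain' (· ≠ ·) := hcy.tail
  by_cases hab : ∀ a ∈ x.getLast?, ∀ b ∈ y.head?, a ≠ b
  · left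
    rw [hteq]; show List.IsChain _ _; rw [List.isChain_append]
    exact ⟨hx, hy, hab⟩
  · right
    push_neg at hab
    obtain ⟨a, ha, b, hb, hab⟩ := hab
    have hyt : y = b :: y.tail := by
      cases y with
      | nil => simp at hb
      | cons d y' => simp at hb; simp [hb]
    have hyl : y.length = y.tail.length + 1 := by rw [hyt]; simp
    refine ⟨x ++ y.tail, ⟨x, b, 1, y.tail, le_refl 1, ?_, rfl⟩, ?_, ?_⟩
    · rw [hteq]; conv_lhs => rw [hyt]
      simp
    · show List.IsChain _ _; rw [List.isChain_append]
      refine ⟨hx, hy.tail, ?_⟩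
      intro p hp q hq
      have hpa : p = a := by
        have h1 : x.getLast? = some a := ha
        rw [h1] at hp
        exact (by simpa using hp : a = p).symm
      have hbq : b ≠ q := by
        have hcb : (b :: y.tail).Chain' (· ≠ ·) := hyt ▸ hy
        rw [List.Chain', List.isChain_cons] at hcb
        exact hcb.1 q hq
      rw [hpa, hab]
      exact hbq
    · simp [List.length_append]
      omega

lemma key {α : Type*} (n : ℕ) : ∀ s : List α, s.length < n → s.Chain' (· ≠ ·) →
    (PPos s ↔ Even s.length) := by
  induction n with
  | zero => intro s hl; omega
  | succ n ih =>
    intro s hlen hs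
    constructor
    · intro hp
      by_contra hodd
      rw [Nat.not_even_iff_odd] at hodd
      cases s with
      | nil => simp at hodd
      | cons c s' =>
        have hN : NPos s' := hp s' (move_tail c s')
        have hP : PPos s' := by
          rw [ih s' (by simp at hlen ⊢; omega) hs.tail]
          have h1 := Nat.odd_iff.mp hodd
          simp [List.length_cons] at h1
          rw [Nat.even_iff]
          omega
        exact npos_not_ppos hN hP
    · intro heven t hm
      obtain ⟨hne, hlt, hcase⟩ := move_struct hs hm
      have hs2 : 2 ≤ s.length := by
        have h1 : 1 ≤ s.length := List.length_pos_iff.mpr hne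
        rcases heven with ⟨m, hm'⟩; omega
      rcases hcase with hct | ⟨u, hmu, hcu, hul⟩
      · -- t squarefree, odd length ≥ 1; remove head
        cases t with
        | nil => simp at hlt; omega
        | cons d t' =>
          have hPt' : PPos t' := by
            rw [ih t' (by simp at hlt ⊢; omega) hct.tail]
            simp at hlt
            rcases heven with ⟨m, hm'⟩
            exact ⟨m - 1, by omega⟩
          exact NPos.intro (move_tail d t') hPt'
      · have hPu : PPos u := by
          rw [ih u (by omega) hcu]
          rcases heven with ⟨m, hm'⟩
          exact ⟨m - 1, by omega⟩
        exact NPos.intro hmu hPu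

/-- If `s` has no two equal adjacent characters, then `s` is a P-position iff `|s|` is even. -/
theorem stmt_13 {α : Type*} (s : List α) (h : s.Chain' (· ≠ ·)) :
    PPos s ↔ Even s.length := by
  exact key (s.length + 1) s (Nat.lt_succ_self _) h
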